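/- Let π : E → X be a discrete opfibration of categories. Then the induced postcomposition functor Diag←(π) : Diag←(E) → Diag←(X) on contravariant diagram categories is itself a discrete opfibration. -/

import Mathlib

open CategoryTheory

universe v u

variable {Eb X : Type u} [Category.{v} Eb] [Category.{v} X]

/-- `p = (e', fb)` is a lift of `f : π.obj e ⟶ y` with domain `e`. -/
def Lifts (π : Eb ⥤ X) (e : Eb) {y : X} (f : π.obj e ⟶ y) (p : Σ e' : Eb, e ⟶ e') : Prop :=
  ∃ h : π.obj p.1 = y, π.map p.2 ≫ eqToHom h = f

/-- A functor is a discrete opfibration if every morphism out of the image of an object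
has a unique lift with prescribed domain. -/
def IsDiscreteOpfibration (π : Eb ⥤ X) : Prop :=
  ∀ (e : Eb) (y : X) (f : π.obj e ⟶ y), ∃! p : Σ e' : Eb, e ⟶ e', Lifts π e f p

namespace DOpfAux

variable (π : Eb ⥤ X) (hπ : IsDiscreteOpfibration π)

noncomputable def Lo {e : Eb} {y : X} (f : π.obj e ⟶ y) : Eb := (hπ e y f).choose.1

noncomputable def Lh {e : Eb} {y : X} (f : π.obj e ⟶ y) : e ⟶ Lo π hπ f := (hπ e y f).choose.2

lemma hLo {e : Eb} {y : X} (f : π.obj e ⟶ y) : π.obj (Lo π hπ f) = y :=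
  (hπ e y f).choose_spec.1.choose

lemma hLh {e : Eb} {y : X} (f : π.obj e ⟶ y) :
    π.map (Lh π hπ f) = f ≫ eqToHom (hLo π hπ f).symm := by
  have h : π.map (Lh π hπ f) ≫ eqToHom (hLo π hπ f) = f :=
    (hπ e y f).choose_spec.1.choose_spec
  rw [← cancel_mono (eqToHom (hLo π hπ f))]
  simp [h]

lemma uniq {e : Eb} {y : X} (f : π.obj e ⟶ y) (p : Σ e' : Eb, e ⟶ e')
    (hp : Lifts π e f p) : p = ⟨Lo π hπ f, Lh π hπ f⟩ :=
  (hπ e y f).choose_spec.2 p hp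

lemma uniq_obj {e : Eb} {y : X} (f : π.obj e ⟶ y) {e' : Eb} (g : e ⟶ e')
    (h : π.obj e' = y) (hg : π.map g ≫ eqToHom h = f) : e' = Lo π hπ f :=
  congrArg Sigma.fst (uniq π hπ f ⟨e', g⟩ ⟨h, hg⟩)

lemma inj (hπ : IsDiscreteOpfibration π) {e e' : Eb} {g g' : e ⟶ e'}
    (h : π.map g = π.map g') : g = g' := by
  have h1 := uniq π hπ (π.map g') ⟨e', g⟩ ⟨rfl, by simp [h]⟩
  have h2 := uniq π hπ (π.map g') ⟨e', g'⟩ ⟨rfl, by simp⟩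
  simpa using h1.trans h2.symm

section Main

variable {J K : Type v} [SmallCategory J] [SmallCategory K]
variable (D : J ⥤ X) (E : K ⥤ X) (R : K ⥤ J) (ρ : R ⋙ D ⟶ E)
variable (Db : J ⥤ Eb) (hDb : Db ⋙ π = D)

def f0 (k : K) : π.obj (Db.obj (R.obj k)) ⟶ E.obj k :=
  eqToHom (Functor.congr_obj hDb (R.obj k)) ≫ ρ.app k

lemma objEq {k k' : K} (u : k ⟶ k') :
    Lo π hπ (eqToHom (hLo π hπ (f0 π D E R ρ Db hDb k)) ≫ E.map u)
      = Lo π hπ (f0 π D E R ρ Db hDb k') := by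
  have h1 : Lo π hπ (eqToHom (hLo π hπ (f0 π D E R ρ Db hDb k)) ≫ E.map u)
      = Lo π hπ (f0 π D E R ρ Db hDb k ≫ E.map u) := by
    refine uniq_obj π hπ _
      (Lh π hπ (f0 π D E R ρ Db hDb k) ≫
        Lh π hπ (eqToHom (hLo π hπ (f0 π D E R ρ Db hDb k)) ≫ E.map u))
      (hLo π hπ _) ?_
    simp [hLh]
  have h2 : Lo π hπ (f0 π D E R ρ Db hDb k') = Lo π hπ (f0 π D E R ρ Db hDb k ≫ E.map u) := by
    refine uniq_obj π hπ _ (Db.map (R.map u) ≫ Lh π hπ (f0 π D E R ρ Db hDb k'))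
      (hLo π hπ _) ?_
    have hc := Functor.congr_hom hDb (R.map u)
    have hn := ρ.naturality u
    simp only [Functor.comp_map] at hc hn
    simp [hLh, hc, reassoc_of% hn]
    simp [f0, reassoc_of% hn, hn]
  exact h1.trans h2.symm

noncomputable def EbMap {k k' : K} (u : k ⟶ k') :
    Lo π hπ (f0 π D E R ρ Db hDb k) ⟶ Lo π hπ (f0 π D E R ρ Db hDb k') :=
  Lh π hπ (eqToHom (hLo π hπ (f0 π D E R ρ Db hDb k)) ≫ E.map u) ≫
    eqToHom (objEq π hπ D E R ρ Db hDb u)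

lemma EbMap_img {k k' : K} (u : k ⟶ k') :
    π.map (EbMap π hπ D E R ρ Db hDb u) =
      eqToHom (hLo π hπ (f0 π D E R ρ Db hDb k)) ≫ E.map u ≫
        eqToHom (hLo π hπ (f0 π D E R ρ Db hDb k')).symm := by
  simp [EbMap, hLh, eqToHom_map]

noncomputable def EbF : K ⥤ Eb where
  obj k := Lo π hπ (f0 π D E R ρ Db hDb k)
  map u := EbMap π hπ D E R ρ Db hDb u
  map_id k := by
    apply inj π hπ
    rw [EbMap_img]
    simp
  map_comp u v := by
    apply inj π hπ
    rw [π.map_comp, EbMap_img, EbMap_img, EbMap_img]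
    simp

noncomputable def ρb : R ⋙ Db ⟶ EbF π hπ D E R ρ Db hDb where
  app k := Lh π hπ (f0 π D E R ρ Db hDb k)
  naturality k k' u := by
    apply inj π hπ
    have hc := Functor.congr_hom hDb (R.map u)
    have hn := ρ.naturality u
    simp only [Functor.comp_map] at hc hn
    simp only [Functor.comp_map, Functor.map_comp, EbF, hLh, EbMap_img, hc]
    simp
    simp [f0, reassoc_of% hn]

lemma hE : EbF π hπ D E R ρ Db hDb ⋙ π = E := by
  refine CategoryTheory.Functor.ext (fun k => hLo π hπ _) (fun k k' u => ?_)
  simpa [EbF] using EbMap_img π hπ D E R ρ Db hDb u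

end Main

end DOpfAux

open DOpfAux



/-- If `π : Eb ⥤ X` is a discrete opfibration then the postcomposition functor
`Diag←(π) : Diag←(Eb) ⥤ Diag←(X)` is a discrete opfibration: given a morphism
`(R, ρ) : (J, D) ⟶ (K, E)` of contravariant diagrams in `X` (so `R : K ⥤ J` and
`ρ : R ⋙ D ⟶ E`) and a lift `Db` of `D` along `π`, there is a unique pair
`(Eb', ρb)` consisting of a diagram `Eb' : K ⥤ Eb` and `ρb : R ⋙ Db ⟶ Eb'` lying
over `(R, ρ)`, i.e. with `Eb' ⋙ π = E` and `π` sending each component of `ρb` to the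
corresponding component of `ρ`. -/
theorem diagContra_map_isDiscreteOpfibration
    (π : Eb ⥤ X) (hπ : IsDiscreteOpfibration π)
    {J K : Type v} [SmallCategory J] [SmallCategory K]
    (D : J ⥤ X) (E : K ⥤ X) (R : K ⥤ J) (ρ : R ⋙ D ⟶ E)
    (Db : J ⥤ Eb) (hDb : Db ⋙ π = D) :
    ∃! p : Σ Eb' : K ⥤ Eb, (R ⋙ Db ⟶ Eb'),
      ∃ h : p.1 ⋙ π = E,
        ∀ k : K, π.map (p.2.app k) =
          eqToHom (Functor.congr_obj hDb (R.obj k)) ≫ ρ.app k ≫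
            eqToHom (Functor.congr_obj h k).symm := by
  refine ⟨⟨EbF π hπ D E R ρ Db hDb, ρb π hπ D E R ρ Db hDb⟩,
    ⟨hE π hπ D E R ρ Db hDb, fun k => ?_⟩, ?_⟩
  · show π.map (Lh π hπ (f0 π D E R ρ Db hDb k)) = _
    rw [hLh]
    exact Category.assoc _ _ _
  · rintro ⟨F, σ⟩ ⟨hF, hσ⟩
    have hobj : ∀ k, F.obj k = (EbF π hπ D E R ρ Db hDb).obj k := fun k => by
      refine uniq_obj π hπ _ (σ.app k) (Functor.congr_obj hF k) ?_
      rw [hσ k]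
      simp [f0]
    have hFE : F = EbF π hπ D E R ρ Db hDb := by
      refine CategoryTheory.Functor.ext hobj (fun k k' u => ?_)
      apply inj π hπ
      have hc := Functor.congr_hom hF u
      simp only [Functor.comp_map] at hc
      simp only [Functor.map_comp, eqToHom_map, hc]
      have he := Functor.congr_hom (hE π hπ D E R ρ Db hDb) u
      simp only [Functor.comp_map] at he
      rw [he]
      simp
    subst hFE
    have hσρ : σ = ρb π hπ D E R ρ Db hDb := by
      ext k
      apply inj π hπ
      rw [hσ k]
      show _ = π.map (Lh π hπ (f0 π D E R ρ Db hDb k))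
      rw [hLh]
      exact (Category.assoc _ _ _).symm
    rw [hσρ]
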